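/- arXiv:1305.2377 — 3 statements merged into one kernel-verified Lean document; each statement's English description precedes it below -/
import Mathlib

section
/- Let ᾱ: B → Out_D(L) be a coupling, α: B → Der_D(L) a lift, and ρ ∈ Ω_B²(L) with ad_ρ = F_α (a lifting pair). Then λ = d_α ρ ∈ Ω_B³(L) takes values in the center Z(L) of L. -/
/-- The order-preserving inclusion `Fin (n-1) → Fin n` skipping the index `j`. -/
def skipIdx {n : ℕ} (j : Fin n) (m : Fin (n - 1)) : Fin n :=
  if (m : ℕ) < (j : ℕ) then ⟨m, by have := m.isLt; omega⟩
  else ⟨(m : ℕ) + 1, by have := m.isLt; omega⟩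

/-- The Chevalley–Eilenberg/de Rham differential of an `M`-valued `p`-form on a Lie
algebroid `B`, twisted by a connection `α : B → (M → M)`. -/
def dform {B M : Type*} [LieRing B] [AddCommGroup M]
    (α : B → M → M) (p : ℕ) (ξ : (Fin p → B) → M) :
    (Fin (p + 1) → B) → M :=
  fun s =>
    (∑ i : Fin (p + 1), ((-1 : ℤ) ^ (i : ℕ)) • α (s i) (ξ (s ∘ i.succAbove))) +
      ∑ i : Fin (p + 1), ∑ j : Fin p,
        if (i : ℕ) ≤ (j : ℕ) then
          ((-1 : ℤ) ^ ((i : ℕ) + (j : ℕ) + 1)) •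
            ξ (fun m : Fin p =>
              if hm : (m : ℕ) = 0 then ⁅s i, s (i.succAbove j)⁆
              else s (i.succAbove (skipIdx j ⟨(m : ℕ) - 1, by have := m.isLt; omega⟩)))
        else 0

theorem dform_three {B M : Type*} [LieRing B] [AddCommGroup M]
    (α : B → M → M) (ξ : (Fin 2 → B) → M) (s : Fin 3 → B) :
    dform α 2 ξ s = α (s 0) (ξ ![s 1, s 2]) - α (s 1) (ξ ![s 0, s 2]) + α (s 2) (ξ ![s 0, s 1])
      - ξ ![⁅s 0, s 1⁆, s 2] + ξ ![⁅s 0, s 2⁆, s 1] - ξ ![⁅s 1, s 2⁆, s 0] := by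
  have e0 : s ∘ (0 : Fin 3).succAbove = ![s 1, s 2] := by
    funext m; fin_cases m <;> rfl
  have e1 : s ∘ (1 : Fin 3).succAbove = ![s 0, s 2] := by
    funext m; fin_cases m <;> rfl
  have e2 : s ∘ (2 : Fin 3).succAbove = ![s 0, s 1] := by
    funext m; fin_cases m <;> rfl
  have f00 : (fun m : Fin 2 =>
      if hm : (m : ℕ) = 0 then ⁅s 0, s ((0:Fin 3).succAbove 0)⁆
      else s ((0:Fin 3).succAbove (skipIdx 0 ⟨(m : ℕ) - 1, by have := m.isLt; omega⟩)))
      = ![⁅s 0, s 1⁆, s 2] := by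
    funext m; fin_cases m <;> simp [skipIdx]
  have f01 : (fun m : Fin 2 =>
      if hm : (m : ℕ) = 0 then ⁅s 0, s ((0:Fin 3).succAbove 1)⁆
      else s ((0:Fin 3).succAbove (skipIdx 1 ⟨(m : ℕ) - 1, by have := m.isLt; omega⟩)))
      = ![⁅s 0, s 2⁆, s 1] := by
    funext m; fin_cases m <;> simp [skipIdx]
  have f11 : (fun m : Fin 2 =>
      if hm : (m : ℕ) = 0 then ⁅s 1, s ((1:Fin 3).succAbove 1)⁆
      else s ((1:Fin 3).succAbove (skipIdx 1 ⟨(m : ℕ) - 1, by have := m.isLt; omega⟩)))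
      = ![⁅s 1, s 2⁆, s 0] := by
    funext m; fin_cases m <;> simp [skipIdx]
  show (∑ i : Fin 3, ((-1 : ℤ) ^ (i : ℕ)) • α (s i) (ξ (s ∘ i.succAbove))) + _ = _
  rw [Fin.sum_univ_three]
  show _ + ∑ i : Fin 3, ∑ j : Fin 2, _ = _
  rw [Fin.sum_univ_three]
  simp only [Fin.sum_univ_two, e0, e1, e2, f00, f01, f11]
  norm_num
  abel

/-- Let `(α, ρ)` be a lifting pair of a coupling `ᾱ : B → Out_D(L)`:
`α : B → Der_D(L)` is an `R`-linear lift of `ᾱ` (a `B`-connection on `L` by bracket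
derivations) and `ρ ∈ Ω_B²(L)` satisfies `ad_ρ = F_α`.  Then `λ = d_α ρ ∈ Ω_B³(L)`
takes values in the center `Z(L)` of `L`. -/
theorem lifting_pair_dρ_central
    {k : Type*} [Field k] {R : Type*} [CommRing R] [Algebra k R]
    {B : Type*} [LieRing B] [LieAlgebra k B] [Module R B] [IsScalarTower k R B]
    {L : Type*} [LieRing L] [LieAlgebra k L] [LieAlgebra R L] [IsScalarTower k R L]
    (a : B →ₗ[R] Derivation k R R)
    (hLeibB : ∀ (s t : B) (f : R), ⁅s, f • t⁆ = f • ⁅s, t⁆ + a s f • t)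
    (α : B → L →ₗ[k] L)
    (hadd : ∀ b b' : B, α (b + b') = α b + α b')
    (hsmul : ∀ (f : R) (b : B) (l : L), α (f • b) l = f • α b l)
    (hD : ∀ (b : B) (l l' : L), α b ⁅l, l'⁆ = ⁅α b l, l'⁆ + ⁅l, α b l'⁆)
    (hLeibα : ∀ (b : B) (f : R) (l : L), α b (f • l) = f • α b l + a b f • l)
    (ρ : B [⋀^Fin 2]→ₗ[R] L)
    (hF : ∀ (b₁ b₂ : B) (l : L),
      α b₁ (α b₂ l) - α b₂ (α b₁ l) - α ⁅b₁, b₂⁆ l = ⁅ρ ![b₁, b₂], l⁆) :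
    ∀ (s : Fin 3 → B) (l : L), ⁅dform (fun b x => α b x) 2 ⇑ρ s, l⁆ = 0 := by
  intro s l
  rw [dform_three]
  set b0 := s 0; set b1 := s 1; set b2 := s 2
  have hbr : ∀ (b : B) (x m : L), ⁅α b x, m⁆ = α b ⁅x, m⁆ - ⁅x, α b m⁆ := by
    intro b x m; rw [hD]; abel
  have hsub : ∀ (x y : B) (m : L), α (x - y) m = α x m - α y m := by
    intro x y m
    have h : (AddMonoidHom.mk' α hadd) (x - y) =
        (AddMonoidHom.mk' α hadd) x - (AddMonoidHom.mk' α hadd) y := map_sub _ x y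
    simpa using congrArg (fun f : L →ₗ[k] L => f m) h
  have hjac : ⁅⁅b1, b2⁆, b0⁆ = ⁅⁅b0, b2⁆, b1⁆ - ⁅⁅b0, b1⁆, b2⁆ := by
    rw [← lie_skew ⁅b1, b2⁆ b0, leibniz_lie b0 b1 b2, ← lie_skew b1 ⁅b0, b2⁆]
    abel
  simp only [sub_lie, add_lie, hbr, ← hF, map_sub, hjac, hsub]
  abel
end

section
/- Let (α,ρ) be a lifting pair of the coupling ᾱ and φ ∈ Ω_B¹(L). Then (α + ad_φ, ρ + d_α φ + ½[φ,φ]) is again a lifting pair of ᾱ, and the associated 3-cocycles agree: d_{α+ad_φ}(ρ + d_α φ + ½[φ,φ]) = d_α ρ. -/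
/-- The adjoint operator `ad l = ⁅l, ·⁆` as a `k`-linear endomorphism of `L`. -/
def adE {k : Type*} [CommRing k] {L : Type*} [LieRing L] [LieAlgebra k L] (l : L) :
    L →ₗ[k] L where
  toFun x := ⁅l, x⁆
  map_add' := by simp
  map_smul' := by intro c x; exact lie_smul c l x

lemma adE_apply {k : Type*} [CommRing k] {L : Type*} [LieRing L] [LieAlgebra k L]
    (l x : L) : adE (k := k) l x = ⁅l, x⁆ := rfl

lemma dform_one_apply {B L : Type*} [LieRing B] [AddCommGroup L]
    (α : B → L → L) (f : B → L) (s : Fin 2 → B) :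
    dform α 1 (fun w => f (w 0)) s
      = α (s 0) (f (s 1)) - α (s 1) (f (s 0)) - f ⁅s 0, s 1⁆ := by
  simp [dform, Fin.sum_univ_two, Fin.sum_univ_one, skipIdx, Fin.succAbove]
  abel

lemma dform_two_apply {B L : Type*} [LieRing B] [AddCommGroup L]
    (α : B → L → L) (g : B → B → L) (s : Fin 3 → B) :
    dform α 2 (fun v => g (v 0) (v 1)) s
      = α (s 0) (g (s 1) (s 2)) - α (s 1) (g (s 0) (s 2)) + α (s 2) (g (s 0) (s 1))
        - g ⁅s 0, s 1⁆ (s 2) + g ⁅s 0, s 2⁆ (s 1) - g ⁅s 1, s 2⁆ (s 0) := by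
  simp [dform, Fin.sum_univ_three, Fin.sum_univ_two, skipIdx, Fin.succAbove]
  abel

lemma dform_two_ext {B L : Type*} [LieRing B] [AddCommGroup L]
    (α : B → L → L) (ξ : (Fin 2 → B) → L) (g : B → B → L)
    (hξ : ∀ v, ξ v = g (v 0) (v 1)) (s : Fin 3 → B) :
    dform α 2 ξ s
      = α (s 0) (g (s 1) (s 2)) - α (s 1) (g (s 0) (s 2)) + α (s 2) (g (s 0) (s 1))
        - g ⁅s 0, s 1⁆ (s 2) + g ⁅s 0, s 2⁆ (s 1) - g ⁅s 1, s 2⁆ (s 0) := by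
  have h : ξ = fun v => g (v 0) (v 1) := funext hξ
  rw [h]; exact dform_two_apply α g s


/-- Let `(α, ρ)` be a lifting pair of the coupling `ᾱ` and
`φ ∈ Ω_B¹(L)`.  Then `(α + ad_φ, ρ + d_α φ + ½[φ,φ])` is again a lifting pair of `ᾱ`
(here `½[φ,φ](b₁,b₂) = ⁅φ b₁, φ b₂⁆`), and the associated 3-cocycles agree:
`d_{α+ad_φ}(ρ + d_α φ + ½[φ,φ]) = d_α ρ`. -/
theorem lifting_pair_gauge_transform
    {k : Type*} [Field k] {R : Type*} [CommRing R] [Algebra k R]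
    {B : Type*} [LieRing B] [LieAlgebra k B] [Module R B] [IsScalarTower k R B]
    {L : Type*} [LieRing L] [LieAlgebra k L] [LieAlgebra R L] [IsScalarTower k R L]
    (a : B →ₗ[R] Derivation k R R)
    (hLeibB : ∀ (s t : B) (f : R), ⁅s, f • t⁆ = f • ⁅s, t⁆ + a s f • t)
    (α : B → L →ₗ[k] L)
    (hadd : ∀ b b' : B, α (b + b') = α b + α b')
    (hsmul : ∀ (f : R) (b : B) (l : L), α (f • b) l = f • α b l)
    (hD : ∀ (b : B) (l l' : L), α b ⁅l, l'⁆ = ⁅α b l, l'⁆ + ⁅l, α b l'⁆)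
    (hLeibα : ∀ (b : B) (f : R) (l : L), α b (f • l) = f • α b l + a b f • l)
    (ρ : B [⋀^Fin 2]→ₗ[R] L)
    (hF : ∀ (b₁ b₂ : B) (l : L),
      α b₁ (α b₂ l) - α b₂ (α b₁ l) - α ⁅b₁, b₂⁆ l = ⁅ρ ![b₁, b₂], l⁆)
    (φ : B →ₗ[R] L) :
    ∀ (α' : B → L →ₗ[k] L) (ρ' : (Fin 2 → B) → L),
      α' = (fun b => α b + adE (φ b)) →
      ρ' = (fun v : Fin 2 → B =>
        ρ v + dform (fun b x => α b x) 1 (fun w : Fin 1 → B => φ (w 0)) v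
          + ⁅φ (v 0), φ (v 1)⁆) →
      -- `(α', ρ')` is again a lifting pair of `ᾱ`:
      ((∀ (b : B) (l l' : L), α' b ⁅l, l'⁆ = ⁅α' b l, l'⁆ + ⁅l, α' b l'⁆) ∧
       (∀ (b : B) (f : R) (l : L), α' b (f • l) = f • α' b l + a b f • l) ∧
       (∀ (b : B) (l : L), ∃ l₀ : L, α' b l = α b l + ⁅l₀, l⁆) ∧
       (∀ (b₁ b₂ : B) (l : L),
         α' b₁ (α' b₂ l) - α' b₂ (α' b₁ l) - α' ⁅b₁, b₂⁆ l = ⁅ρ' ![b₁, b₂], l⁆)) ∧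
      -- and the associated cocycles agree:
      (∀ s : Fin 3 → B,
        dform (fun b x => α' b x) 2 ρ' s = dform (fun b x => α b x) 2 ⇑ρ s) := by
  intro α' ρ' hα' hρ'
  subst hα' hρ'
  have hF' : ∀ (b₁ b₂ : B) (l : L),
      α ⁅b₁, b₂⁆ l = α b₁ (α b₂ l) - α b₂ (α b₁ l) - ⁅ρ ![b₁, b₂], l⁆ := by
    intro b₁ b₂ l
    rw [← hF b₁ b₂ l]; abel
  have hveta : ∀ v : Fin 2 → B, ρ v = ρ ![v 0, v 1] := by
    intro v
    congr 1
    funext i; fin_cases i <;> simp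
  have hρ'g : ∀ v : Fin 2 → B,
      ρ v + dform (fun b x => α b x) 1 (fun w : Fin 1 → B => φ (w 0)) v
          + ⁅φ (v 0), φ (v 1)⁆
      = (fun x y : B => ρ ![x, y] + (α x (φ y) - α y (φ x) - φ ⁅x, y⁆) + ⁅φ x, φ y⁆)
          (v 0) (v 1) := by
    intro v
    rw [dform_one_apply (fun b x => α b x) (fun b => φ b) v, hveta v]
  constructor
  · refine ⟨?_, ?_, ?_, ?_⟩
    · intro b l l'
      simp only [LinearMap.add_apply, adE_apply]
      rw [hD, leibniz_lie (φ b) l l']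
      simp only [add_lie, lie_add]
      abel
    · intro b f l
      simp only [LinearMap.add_apply, adE_apply, hLeibα, lie_smul, smul_add]
      abel
    · intro b l
      exact ⟨φ b, by simp [adE_apply]⟩
    · intro b₁ b₂ l
      simp only [LinearMap.add_apply, adE_apply, hρ'g]
      simp only [Matrix.cons_val_zero, Matrix.cons_val_one, Matrix.head_cons]
      rw [map_add (α b₁), map_add (α b₂), hD b₁ (φ b₂) l, hD b₂ (φ b₁) l]
      simp only [lie_add, add_lie, sub_lie, lie_sub]
      rw [leibniz_lie (φ b₁) (φ b₂) l, ← hF b₁ b₂ l]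
      abel
  · intro s
    rw [dform_two_ext _ _
          (fun x y : B => ρ ![x, y] + (α x (φ y) - α y (φ x) - φ ⁅x, y⁆) + ⁅φ x, φ y⁆)
          hρ'g s,
        dform_two_ext (fun b x => α b x) (⇑ρ) (fun x y => ρ ![x, y]) hveta s]
    simp only [LinearMap.add_apply, adE_apply]
    have e4 : ⁅s 1, ⁅s 2, s 0⁆⁆ = -⁅s 1, ⁅s 0, s 2⁆⁆ := by
      rw [← lie_skew (s 2) (s 0), lie_neg]
    have hJB0 : (⁅⁅s 0, s 1⁆, s 2⁆ : B) - ⁅⁅s 0, s 2⁆, s 1⁆ + ⁅⁅s 1, s 2⁆, s 0⁆ = 0 := by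
      linear_combination (norm := abel) -lie_skew (⁅s 0, s 1⁆ : B) (s 2)
        + lie_skew (⁅s 0, s 2⁆ : B) (s 1) - lie_skew (⁅s 1, s 2⁆ : B) (s 0)
        - lie_jacobi (s 0) (s 1) (s 2) + e4
    have hJB : φ ⁅⁅s 0, s 1⁆, s 2⁆ = φ ⁅⁅s 0, s 2⁆, s 1⁆ - φ ⁅⁅s 1, s 2⁆, s 0⁆ := by
      rw [← map_sub]
      congr 1
      rw [← sub_eq_zero]
      rw [show (⁅⁅s 0, s 1⁆, s 2⁆ : B) - (⁅⁅s 0, s 2⁆, s 1⁆ - ⁅⁅s 1, s 2⁆, s 0⁆)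
          = ⁅⁅s 0, s 1⁆, s 2⁆ - ⁅⁅s 0, s 2⁆, s 1⁆ + ⁅⁅s 1, s 2⁆, s 0⁆ from by abel, hJB0]
    simp only [map_add, map_sub]
    simp only [lie_add, lie_sub, add_lie, sub_lie]
    simp only [hD]
    simp only [hF']
    rw [hJB]
    rw [leibniz_lie (φ (s 0)) (φ (s 1)) (φ (s 2))]
    rw [← lie_skew (φ (s 2)) ⁅φ (s 0), φ (s 1)⁆]
    rw [← lie_skew (φ (s 0)) (ρ ![s 1, s 2]), ← lie_skew (φ (s 1)) (ρ ![s 0, s 2]),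
      ← lie_skew (φ (s 2)) (ρ ![s 0, s 1])]
    rw [← lie_skew (φ (s 0)) (φ ⁅s 1, s 2⁆), ← lie_skew (φ (s 1)) (φ ⁅s 0, s 2⁆),
      ← lie_skew (φ (s 2)) (φ ⁅s 0, s 1⁆)]
    rw [← lie_skew (φ (s 2)) (α (s 0) (φ (s 1))), ← lie_skew (φ (s 2)) (α (s 1) (φ (s 0))),
      ← lie_skew (φ (s 1)) (α (s 2) (φ (s 0)))]
    abel
end

section
/- Let (α,ρ) and (α,ρ') be two lifting pairs of ᾱ with the same connection α. Then ρ' − ρ takes values in the center Z(L), and the associated cocycles differ by a coboundary: d_α ρ' − d_α ρ = d_{ᾱ}(ρ' − ρ). Hence the obstruction class [d_α ρ] ∈ H³(B; Z(L)) is independent of ρ. -/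
set_option maxHeartbeats 1000000 in
lemma dform_sub {B M : Type*} [LieRing B] [AddCommGroup M]
    (α : B → M → M) (hα : ∀ b x y, α b (x - y) = α b x - α b y)
    (p : ℕ) (ξ ξ' : (Fin p → B) → M) (s : Fin (p + 1) → B) :
    dform α p (fun v => ξ' v - ξ v) s = dform α p ξ' s - dform α p ξ s := by
  have key : ∀ (c : Prop) [Decidable c] (x y : M),
      (if c then x - y else 0)
        = (if c then x else 0) - (if c then y else 0) := by
    intro c _ x y
    split_ifs with h
    · rfl
    · simp
  unfold dform
  simp only [hα, smul_sub, key, Finset.sum_sub_distrib]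
  abel

/-- Let `(α, ρ)` and `(α, ρ')` be two lifting pairs of the coupling `ᾱ`
with the same connection `α`.  Then `ρ' − ρ` takes values in the center `Z(L)`, and
the associated cocycles differ by the coboundary of the central-valued form `ρ' − ρ`:
`d_α ρ' − d_α ρ = d_ᾱ(ρ' − ρ)`.  Hence the obstruction class `[d_α ρ] ∈ H³(B; Z(L))`
does not depend on `ρ`. -/
theorem lifting_pair_same_connection
    {k : Type*} [Field k] {R : Type*} [CommRing R] [Algebra k R]
    {B : Type*} [LieRing B] [LieAlgebra k B] [Module R B] [IsScalarTower k R B]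
    {L : Type*} [LieRing L] [LieAlgebra k L] [LieAlgebra R L] [IsScalarTower k R L]
    (a : B →ₗ[R] Derivation k R R)
    (hLeibB : ∀ (s t : B) (f : R), ⁅s, f • t⁆ = f • ⁅s, t⁆ + a s f • t)
    (α : B → L →ₗ[k] L)
    (hadd : ∀ b b' : B, α (b + b') = α b + α b')
    (hsmul : ∀ (f : R) (b : B) (l : L), α (f • b) l = f • α b l)
    (hD : ∀ (b : B) (l l' : L), α b ⁅l, l'⁆ = ⁅α b l, l'⁆ + ⁅l, α b l'⁆)
    (hLeibα : ∀ (b : B) (f : R) (l : L), α b (f • l) = f • α b l + a b f • l)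
    (ρ : B [⋀^Fin 2]→ₗ[R] L)
    (hF : ∀ (b₁ b₂ : B) (l : L),
      α b₁ (α b₂ l) - α b₂ (α b₁ l) - α ⁅b₁, b₂⁆ l = ⁅ρ ![b₁, b₂], l⁆)
    (ρ' : B [⋀^Fin 2]→ₗ[R] L)
    (hF' : ∀ (b₁ b₂ : B) (l : L),
      α b₁ (α b₂ l) - α b₂ (α b₁ l) - α ⁅b₁, b₂⁆ l = ⁅ρ' ![b₁, b₂], l⁆) :
    -- `ρ' − ρ` is central-valued
    (∀ (v : Fin 2 → B) (l : L), ⁅ρ' v - ρ v, l⁆ = 0) ∧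
    -- the two cocycles differ by the coboundary of the central 2-form `ρ' − ρ`
    (∀ s : Fin 3 → B,
      dform (fun b x => α b x) 2 ⇑ρ' s - dform (fun b x => α b x) 2 ⇑ρ s
        = dform (fun b x => α b x) 2 (fun v : Fin 2 → B => ρ' v - ρ v) s) := by
  constructor
  · intro v l
    have hv : v = ![v 0, v 1] := by
      funext i; fin_cases i <;> rfl
    have h := (hF (v 0) (v 1) l).symm.trans (hF' (v 0) (v 1) l)
    rw [hv, sub_lie, ← h, sub_self]
  · intro s
    exact (dform_sub (fun b x => α b x) (fun b x y => map_sub (α b) x y) 2 ⇑ρ ⇑ρ' s).symm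
end
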